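/- Simple recurrence in L1: g_{i,j,k}(L1,L2,M) = g_{i,j,k}(L1-1, L2, M) + q^{L1} g_{i-1,j,k}(L1-1, L2-1, M-1), for all integers i, j, k, L1, L2, M, where g is the triple sum of Theorem 5. -/
import Mathlib


open Finset

noncomputable def q : RatFunc ℚ := RatFunc.X

/-- Triangular number `T m = m(m+1)/2` (integer division; note `T (-1) = 0`). -/
def T (m : ℤ) : ℤ := m * (m + 1) / 2

/-- The Gaussian binomial coefficient `C(N, n) = (q^{N-n+1};q)_n / (q;q)_n` for
`n ≥ 0`, and `0` when out of range (`n < 0`).  For `0 ≤ N < n` the product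
contains the factor `1 - q^0 = 0`, so it vanishes. -/
noncomputable def qbin (N n : ℤ) : RatFunc ℚ :=
  if n < 0 then 0
  else ∏ r ∈ Finset.range n.toNat, (1 - q ^ (N - (r : ℤ))) / (1 - q ^ ((r : ℤ) + 1))


/-- The sum `g_{i,j,k}(L1,L2,M)` of Theorem 5 of Berkovich–Riese: the sum over
nonnegative integers `a, b, c, ab, ac, bc` with `i = a+ab+ac`, `j = b+ab+bc`,
`k = c+ac+bc` (summation variables `ab, ac, bc`; `a, b, c` are determined). -/
noncomputable def g (i j k L1 L2 M : ℤ) : RatFunc ℚ :=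
  ∑ ab ∈ Finset.range (i.toNat + 1), ∑ ac ∈ Finset.range (i.toNat + 1),
    ∑ bc ∈ Finset.range (j.toNat + 1),
      if (ab : ℤ) + ac ≤ i ∧ (ab : ℤ) + bc ≤ j ∧ (ac : ℤ) + bc ≤ k then
        (let a : ℤ := i - ab - ac
         let b : ℤ := j - ab - bc
         let c : ℤ := k - ac - bc
         let t : ℤ := a + b + c + ab + ac + bc
         q ^ (T t + T ab + T ac + T ((bc : ℤ) - 1)) *
           (q ^ (bc : ℤ) * qbin (L1 - t + a) a * qbin (L2 - t + b) b * qbin (L2 - t) ab *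
               qbin (M - t + c) c * qbin (M - t) ac * qbin (M - t) bc +
             qbin (L1 - t + a - 1) (a - 1) * qbin (L2 - t + b) b * qbin (L2 - t) ab *
               qbin (M - t + c) c * qbin (M - t) ac * qbin (M - t) ((bc : ℤ) - 1)))
      else 0

lemma q_ne_zero : q ≠ 0 := RatFunc.X_ne_zero

lemma q_pow_ne_one (n : ℕ) (hn : n ≠ 0) : q ^ n ≠ 1 := by
  intro h
  have : (Polynomial.X : Polynomial ℚ) ^ n = 1 := by
    apply RatFunc.algebraMap_injective ℚ
    rw [map_pow, RatFunc.algebraMap_X, map_one]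
    exact h
  have := congrArg Polynomial.natDegree this
  simp [Polynomial.natDegree_X_pow] at this
  exact hn this

lemma one_sub_q_ne_zero (r : ℕ) : (1 : RatFunc ℚ) - q ^ ((r:ℤ)+1) ≠ 0 := by
  rw [show ((r:ℤ)+1) = ((r+1 : ℕ) : ℤ) by push_cast; ring, zpow_natCast, sub_ne_zero]
  exact fun h => q_pow_ne_one (r+1) (Nat.succ_ne_zero r) h.symm

lemma den_ne_zero (k : ℕ) : (∏ r ∈ range k, ((1:RatFunc ℚ) - q ^ ((r:ℤ)+1))) ≠ 0 :=
  Finset.prod_ne_zero_iff.mpr fun r _ => one_sub_q_ne_zero r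

lemma qbin_neg (N n : ℤ) (h : n < 0) : qbin N n = 0 := by rw [qbin, if_pos h]

lemma qbin_pascal (N n : ℤ) : qbin N n = qbin (N-1) n + q ^ (N - n) * qbin (N-1) (n-1) := by
  rcases lt_trichotomy n 0 with h | h | h
  · rw [qbin_neg _ _ h, qbin_neg _ _ h, qbin_neg _ _ (by omega : n - 1 < 0)]; ring
  · subst h
    rw [qbin, if_neg (lt_irrefl 0), qbin, if_neg (lt_irrefl 0), qbin_neg _ _ (by norm_num)]
    simp
  · obtain ⟨k, hk⟩ : ∃ k : ℕ, n = (k:ℤ) + 1 := ⟨(n-1).toNat, by omega⟩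
    subst hk
    rw [qbin, if_neg (by omega), qbin, if_neg (by omega),
        show (k:ℤ) + 1 - 1 = (k:ℤ) by ring, qbin, if_neg (by omega),
        show ((k:ℤ)+1).toNat = k + 1 by omega, show ((k:ℤ)).toNat = k by omega]
    rw [Finset.prod_div_distrib, Finset.prod_div_distrib, Finset.prod_div_distrib]
    have A1 : ∏ r ∈ range (k+1), ((1:RatFunc ℚ) - q^(N - (r:ℤ)))
        = (1 - q^N) * ∏ r ∈ range k, (1 - q^(N-1-(r:ℤ))) := by
      rw [Finset.prod_range_succ' (fun r => ((1:RatFunc ℚ) - q ^ (N - (r:ℤ))))]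
      rw [mul_comm]
      push_cast
      congr 1
      · norm_num
      · apply Finset.prod_congr rfl
        intro x _
        congr 2
        ring
    have A2 : ∏ r ∈ range (k+1), ((1:RatFunc ℚ) - q^(N-1 - (r:ℤ)))
        = (∏ r ∈ range k, (1 - q^(N-1-(r:ℤ)))) * (1 - q^(N - ((k:ℤ)+1))) := by
      rw [Finset.prod_range_succ]
      congr 3; ring
    have A3 : ∏ r ∈ range (k+1), ((1:RatFunc ℚ) - q^((r:ℤ)+1))
        = (∏ r ∈ range k, (1 - q^((r:ℤ)+1))) * (1 - q^((k:ℤ)+1)) := by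
      rw [Finset.prod_range_succ]
    rw [A1, A2, A3]
    set P := ∏ r ∈ range k, ((1:RatFunc ℚ) - q^(N-1-(r:ℤ)))
    set D := ∏ r ∈ range k, ((1:RatFunc ℚ) - q^((r:ℤ)+1))
    have hD : D ≠ 0 := den_ne_zero k
    have hB : (1:RatFunc ℚ) - q^((k:ℤ)+1) ≠ 0 := one_sub_q_ne_zero k
    have hq : q^N = q^(N-((k:ℤ)+1)) * q^((k:ℤ)+1) := by
      rw [← zpow_add₀ q_ne_zero]; congr 1; ring
    rw [hq]
    field_simp
    ring

lemma T_sub_one (t : ℤ) : T (t - 1) = T t - t := by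
  have h : t * (t + 1) = (t - 1) * (t - 1 + 1) + 2 * t := by ring
  unfold T; omega

lemma core (L1 L2 M t a b c ab ac bc t' a' : ℤ) (ht : t' = t - 1) (ha : a' = a - 1) :
    q ^ (T t + T ab + T ac + T (bc - 1)) *
      (q ^ bc * qbin (L1 - t + a) a * qbin (L2 - t + b) b * qbin (L2 - t) ab *
          qbin (M - t + c) c * qbin (M - t) ac * qbin (M - t) bc +
        qbin (L1 - t + a - 1) (a - 1) * qbin (L2 - t + b) b * qbin (L2 - t) ab *
          qbin (M - t + c) c * qbin (M - t) ac * qbin (M - t) (bc - 1))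
    = q ^ (T t + T ab + T ac + T (bc - 1)) *
      (q ^ bc * qbin (L1 - 1 - t + a) a * qbin (L2 - t + b) b * qbin (L2 - t) ab *
          qbin (M - t + c) c * qbin (M - t) ac * qbin (M - t) bc +
        qbin (L1 - 1 - t + a - 1) (a - 1) * qbin (L2 - t + b) b * qbin (L2 - t) ab *
          qbin (M - t + c) c * qbin (M - t) ac * qbin (M - t) (bc - 1))
    + q ^ L1 * (q ^ (T t' + T ab + T ac + T (bc - 1)) *
      (q ^ bc * qbin (L1 - 1 - t' + a') a' * qbin (L2 - 1 - t' + b) b * qbin (L2 - 1 - t') ab *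
          qbin (M - 1 - t' + c) c * qbin (M - 1 - t') ac * qbin (M - 1 - t') bc +
        qbin (L1 - 1 - t' + a' - 1) (a' - 1) * qbin (L2 - 1 - t' + b) b * qbin (L2 - 1 - t') ab *
          qbin (M - 1 - t' + c) c * qbin (M - 1 - t') ac * qbin (M - 1 - t') (bc - 1))) := by
  subst ht ha
  rw [show L1 - 1 - (t - 1) + (a - 1) = L1 - t + a - 1 by ring,
      show L1 - t + a - 1 - 1 = L1 - t + a - 2 by ring,
      show a - 1 - 1 = a - 2 by ring,
      show L2 - 1 - (t - 1) + b = L2 - t + b by ring,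
      show L2 - 1 - (t - 1) = L2 - t by ring,
      show M - 1 - (t - 1) + c = M - t + c by ring,
      show M - 1 - (t - 1) = M - t by ring,
      show L1 - 1 - t + a - 1 = L1 - t + a - 2 by ring,
      show L1 - 1 - t + a = L1 - t + a - 1 by ring]
  have e1 : qbin (L1 - t + a) a
      = qbin (L1 - t + a - 1) a + q ^ (L1 - t) * qbin (L1 - t + a - 1) (a - 1) := by
    have h := qbin_pascal (L1 - t + a) a
    rw [show L1 - t + a - a = L1 - t by ring] at h
    exact h
  have e2 : qbin (L1 - t + a - 1) (a - 1)
      = qbin (L1 - t + a - 2) (a - 1) + q ^ (L1 - t) * qbin (L1 - t + a - 2) (a - 2) := by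
    have h := qbin_pascal (L1 - t + a - 1) (a - 1)
    rw [show L1 - t + a - 1 - 1 = L1 - t + a - 2 by ring,
        show L1 - t + a - 1 - (a - 1) = L1 - t by ring,
        show a - 1 - 1 = a - 2 by ring] at h
    exact h
  have e3 : q ^ (T t + T ab + T ac + T (bc - 1)) * q ^ (L1 - t)
      = q ^ L1 * q ^ (T (t - 1) + T ab + T ac + T (bc - 1)) := by
    rw [← zpow_add₀ q_ne_zero, ← zpow_add₀ q_ne_zero, T_sub_one t]
    congr 1
    ring
  set X := qbin (L2 - t + b) b * qbin (L2 - t) ab * qbin (M - t + c) c * qbin (M - t) ac *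
    qbin (M - t) bc with hX
  set Y := qbin (L2 - t + b) b * qbin (L2 - t) ab * qbin (M - t + c) c * qbin (M - t) ac *
    qbin (M - t) (bc - 1) with hY
  linear_combination (q ^ (T t + T ab + T ac + T (bc - 1)) * q ^ bc * X) * e1 +
    (q ^ (T t + T ab + T ac + T (bc - 1)) * Y) * e2 +
    (q ^ bc * qbin (L1 - t + a - 1) (a - 1) * X + qbin (L1 - t + a - 2) (a - 2) * Y) * e3

/-- The summand of `g`. -/
noncomputable def gterm (i j k L1 L2 M : ℤ) (ab ac bc : ℕ) : RatFunc ℚ :=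
  if (ab : ℤ) + ac ≤ i ∧ (ab : ℤ) + bc ≤ j ∧ (ac : ℤ) + bc ≤ k then
    (let a : ℤ := i - ab - ac
     let b : ℤ := j - ab - bc
     let c : ℤ := k - ac - bc
     let t : ℤ := a + b + c + ab + ac + bc
     q ^ (T t + T ab + T ac + T ((bc : ℤ) - 1)) *
       (q ^ (bc : ℤ) * qbin (L1 - t + a) a * qbin (L2 - t + b) b * qbin (L2 - t) ab *
           qbin (M - t + c) c * qbin (M - t) ac * qbin (M - t) bc +
         qbin (L1 - t + a - 1) (a - 1) * qbin (L2 - t + b) b * qbin (L2 - t) ab *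
           qbin (M - t + c) c * qbin (M - t) ac * qbin (M - t) ((bc : ℤ) - 1)))
  else 0

lemma g_def (i j k L1 L2 M : ℤ) :
    g i j k L1 L2 M = ∑ ab ∈ range (i.toNat + 1), ∑ ac ∈ range (i.toNat + 1),
      ∑ bc ∈ range (j.toNat + 1), gterm i j k L1 L2 M ab ac bc := rfl

lemma gterm_zero (i j k L1 L2 M : ℤ) (ab ac bc : ℕ)
    (h : ¬((ab : ℤ) + ac ≤ i ∧ (ab : ℤ) + bc ≤ j ∧ (ac : ℤ) + bc ≤ k)) :
    gterm i j k L1 L2 M ab ac bc = 0 := by rw [gterm, if_neg h]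

lemma sum_ext (f : ℕ → RatFunc ℚ) (m n : ℕ) (hmn : m ≤ n) (hf : ∀ x, m ≤ x → f x = 0) :
    ∑ x ∈ range m, f x = ∑ x ∈ range n, f x :=
  Finset.sum_subset (Finset.range_subset_range.mpr hmn)
    (fun x _ hx => hf x (by simpa using hx))

lemma g_eq_sum (i j k L1 L2 M : ℤ) (A B : ℕ) (hA : i.toNat + 1 ≤ A) (hB : j.toNat + 1 ≤ B) :
    g i j k L1 L2 M = ∑ ab ∈ range A, ∑ ac ∈ range A,
      ∑ bc ∈ range B, gterm i j k L1 L2 M ab ac bc := by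
  rw [g_def]
  rw [sum_ext _ _ A hA (fun ab hab => Finset.sum_eq_zero fun ac _ =>
    Finset.sum_eq_zero fun bc _ => gterm_zero _ _ _ _ _ _ _ _ _ (fun hc => by omega))]
  refine Finset.sum_congr rfl fun ab _ => ?_
  rw [sum_ext _ _ A hA (fun ac hac => Finset.sum_eq_zero fun bc _ =>
    gterm_zero _ _ _ _ _ _ _ _ _ (fun hc => by omega))]
  refine Finset.sum_congr rfl fun ac _ => ?_
  rw [sum_ext _ _ B hB (fun bc hbc => gterm_zero _ _ _ _ _ _ _ _ _ (fun hc => by omega))]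

set_option maxHeartbeats 1000000 in
lemma key (i j k L1 L2 M : ℤ) (ab ac bc : ℕ) :
    gterm i j k L1 L2 M ab ac bc
      = gterm i j k (L1 - 1) L2 M ab ac bc
        + q ^ L1 * gterm (i - 1) j k (L1 - 1) (L2 - 1) (M - 1) ab ac bc := by
  by_cases hC : (ab : ℤ) + ac ≤ i ∧ (ab : ℤ) + bc ≤ j ∧ (ac : ℤ) + bc ≤ k
  · have h1 : gterm i j k L1 L2 M ab ac bc = q ^ (T (i - ↑ab - ↑ac + (j - ↑ab - ↑bc) + (k - ↑ac - ↑bc) + ↑ab + ↑ac + ↑bc) + T ↑ab + T ↑ac + T ((bc:ℤ) - 1)) * (q ^ (bc:ℤ) * qbin (L1 - (i - ↑ab - ↑ac + (j - ↑ab - ↑bc) + (k - ↑ac - ↑bc) + ↑ab + ↑ac + ↑bc) + (i - ↑ab - ↑ac)) (i - ↑ab - ↑ac) * qbin (L2 - (i - ↑ab - ↑ac + (j - ↑ab - ↑bc) + (k - ↑ac - ↑bc) + ↑ab + ↑ac + ↑bc) + (j - ↑ab - ↑bc)) (j - ↑ab - ↑bc) * qbin (L2 - (i - ↑ab - ↑ac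 + (j - ↑ab - ↑bc) + (k - ↑ac - ↑bc) + ↑ab + ↑ac + ↑bc)) ↑ab * qbin (M - (i - ↑ab - ↑ac + (j - ↑ab - ↑bc) + (k - ↑ac - ↑bc) + ↑ab + ↑ac + ↑bc) + (k - ↑ac - ↑bc)) (k - ↑ac - ↑bc) * qbin (M - (i - ↑ab - ↑ac + (j - ↑ab - ↑bc) + (k - ↑ac - ↑bc) + ↑ab + ↑ac + ↑bc)) ↑ac * qbin (M - (i - ↑ab - ↑ac + (j - ↑ab - ↑bc) + (k - ↑ac - ↑bc) + ↑ab + ↑ac + ↑bc)) ↑bc + qbin (L1 - (i - ↑ab - ↑ac + (j - ↑ab - ↑bc) + (k - ↑ac - ↑bc) + ↑ab + ↑ac + ↑bc) + (i - ↑ab - ↑ac) - 1) (i - ↑ab - ↑ac - 1) * qbin (L2 - (i - ↑ab - ↑ac + (j - ↑ab - ↑bc) + (k - ↑ac - ↑bc) + ↑ab + ↑ac + ↑bc) + (j - ↑ab - ↑bc)) (j - ↑ab - ↑bc) * qbin (L2 - (i - ↑ab - ↑ac + (j - ↑ab - ↑bc) + (k - ↑ac - ↑bc) + ↑ab + ↑ac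 + ↑bc)) ↑ab * qbin (M - (i - ↑ab - ↑ac + (j - ↑ab - ↑bc) + (k - ↑ac - ↑bc) + ↑ab + ↑ac + ↑bc) + (k - ↑ac - ↑bc)) (k - ↑ac - ↑bc) * qbin (M - (i - ↑ab - ↑ac + (j - ↑ab - ↑bc) + (k - ↑ac - ↑bc) + ↑ab + ↑ac + ↑bc)) ↑ac * qbin (M - (i - ↑ab - ↑ac + (j - ↑ab - ↑bc) + (k - ↑ac - ↑bc) + ↑ab + ↑ac + ↑bc)) ((bc:ℤ) - 1)) := by
      simp only [gterm, if_pos hC]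
    have h2 : gterm i j k (L1 - 1) L2 M ab ac bc = q ^ (T (i - ↑ab - ↑ac + (j - ↑ab - ↑bc) + (k - ↑ac - ↑bc) + ↑ab + ↑ac + ↑bc) + T ↑ab + T ↑ac + T ((bc:ℤ) - 1)) * (q ^ (bc:ℤ) * qbin (L1 - 1 - (i - ↑ab - ↑ac + (j - ↑ab - ↑bc) + (k - ↑ac - ↑bc) + ↑ab + ↑ac + ↑bc) + (i - ↑ab - ↑ac)) (i - ↑ab - ↑ac) * qbin (L2 - (i - ↑ab - ↑ac + (j - ↑ab - ↑bc) + (k - ↑ac - ↑bc) + ↑ab + ↑ac + ↑bc) + (j - ↑ab - ↑bc)) (j - ↑ab - ↑bc) * qbin (L2 - (i - ↑ab - ↑ac + (j - ↑ab - ↑bc) + (k - ↑ac - ↑bc) + ↑ab + ↑ac + ↑bc)) ↑ab * qbin (M - (i - ↑ab - ↑ac + (j - ↑ab - ↑bc) + (k - ↑ac - ↑bc) + ↑ab + ↑ac + ↑bc) + (k - ↑ac - ↑bc)) (k - ↑ac - ↑bc) * qbin (M - (i - ↑ab - ↑ac + (j - ↑ab - ↑bc) + (k - ↑ac - ↑bc)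 + ↑ab + ↑ac + ↑bc)) ↑ac * qbin (M - (i - ↑ab - ↑ac + (j - ↑ab - ↑bc) + (k - ↑ac - ↑bc) + ↑ab + ↑ac + ↑bc)) ↑bc + qbin (L1 - 1 - (i - ↑ab - ↑ac + (j - ↑ab - ↑bc) + (k - ↑ac - ↑bc) + ↑ab + ↑ac + ↑bc) + (i - ↑ab - ↑ac) - 1) (i - ↑ab - ↑ac - 1) * qbin (L2 - (i - ↑ab - ↑ac + (j - ↑ab - ↑bc) + (k - ↑ac - ↑bc) + ↑ab + ↑ac + ↑bc) + (j - ↑ab - ↑bc)) (j - ↑ab - ↑bc) * qbin (L2 - (i - ↑ab - ↑ac + (j - ↑ab - ↑bc) + (k - ↑ac - ↑bc) + ↑ab + ↑ac + ↑bc)) ↑ab * qbin (M - (i - ↑ab - ↑ac + (j - ↑ab - ↑bc) + (k - ↑ac - ↑bc) + ↑ab + ↑ac + ↑bc) + (k - ↑ac - ↑bc)) (k - ↑ac - ↑bc) * qbin (M - (i - ↑ab - ↑ac + (j - ↑ab - ↑bc) + (k - ↑ac - ↑bc) + ↑ab + ↑ac + ↑bc)) ↑ac * qbin (M - (i - ↑ab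 - ↑ac + (j - ↑ab - ↑bc) + (k - ↑ac - ↑bc) + ↑ab + ↑ac + ↑bc)) ((bc:ℤ) - 1)) := by
      simp only [gterm, if_pos hC]
    have h3 : gterm (i - 1) j k (L1 - 1) (L2 - 1) (M - 1) ab ac bc = q ^ (T (i - 1 - ↑ab - ↑ac + (j - ↑ab - ↑bc) + (k - ↑ac - ↑bc) + ↑ab + ↑ac + ↑bc) + T ↑ab + T ↑ac + T ((bc:ℤ) - 1)) * (q ^ (bc:ℤ) * qbin (L1 - 1 - (i - 1 - ↑ab - ↑ac + (j - ↑ab - ↑bc) + (k - ↑ac - ↑bc) + ↑ab + ↑ac + ↑bc) + (i - 1 - ↑ab - ↑ac)) (i - 1 - ↑ab - ↑ac) * qbin (L2 - 1 - (i - 1 - ↑ab - ↑ac + (j - ↑ab - ↑bc) + (k - ↑ac - ↑bc) + ↑ab + ↑ac + ↑bc) + (j - ↑ab - ↑bc)) (j - ↑ab - ↑bc) * qbin (L2 - 1 - (i - 1 - ↑ab - ↑ac + (j - ↑ab - ↑bc) + (k - ↑ac - ↑bc) + ↑ab + ↑ac + ↑bc)) ↑ab * qbin (M - 1 - (i - 1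 - ↑ab - ↑ac + (j - ↑ab - ↑bc) + (k - ↑ac - ↑bc) + ↑ab + ↑ac + ↑bc) + (k - ↑ac - ↑bc)) (k - ↑ac - ↑bc) * qbin (M - 1 - (i - 1 - ↑ab - ↑ac + (j - ↑ab - ↑bc) + (k - ↑ac - ↑bc) + ↑ab + ↑ac + ↑bc)) ↑ac * qbin (M - 1 - (i - 1 - ↑ab - ↑ac + (j - ↑ab - ↑bc) + (k - ↑ac - ↑bc) + ↑ab + ↑ac + ↑bc)) ↑bc + qbin (L1 - 1 - (i - 1 - ↑ab - ↑ac + (j - ↑ab - ↑bc) + (k - ↑ac - ↑bc) + ↑ab + ↑ac + ↑bc) + (i - 1 - ↑ab - ↑ac) - 1) (i - 1 - ↑ab - ↑ac - 1) * qbin (L2 - 1 - (i - 1 - ↑ab - ↑ac + (j - ↑ab - ↑bc) + (k - ↑ac - ↑bc) + ↑ab + ↑ac + ↑bc) + (j - ↑ab - ↑bc)) (j - ↑ab - ↑bc) * qbin (L2 - 1 - (i - 1 - ↑ab - ↑ac + (j - ↑ab - ↑bc) + (k - ↑ac - ↑bc) + ↑ab + ↑ac + ↑bc)) ↑ab * qbin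 (M - 1 - (i - 1 - ↑ab - ↑ac + (j - ↑ab - ↑bc) + (k - ↑ac - ↑bc) + ↑ab + ↑ac + ↑bc) + (k - ↑ac - ↑bc)) (k - ↑ac - ↑bc) * qbin (M - 1 - (i - 1 - ↑ab - ↑ac + (j - ↑ab - ↑bc) + (k - ↑ac - ↑bc) + ↑ab + ↑ac + ↑bc)) ↑ac * qbin (M - 1 - (i - 1 - ↑ab - ↑ac + (j - ↑ab - ↑bc) + (k - ↑ac - ↑bc) + ↑ab + ↑ac + ↑bc)) ((bc:ℤ) - 1)) := by
      by_cases hC2 : (ab : ℤ) + ac ≤ i - 1 ∧ (ab : ℤ) + bc ≤ j ∧ (ac : ℤ) + bc ≤ k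
      · simp only [gterm, if_pos hC2]
      · have hA : i - 1 < (ab : ℤ) + ac := by
          by_contra h
          exact hC2 ⟨by omega, hC.2.1, hC.2.2⟩
        simp only [gterm, if_neg hC2]
        rw [qbin_neg _ _ (show (i - 1 - (ab:ℤ) - ac) < 0 by omega),
            qbin_neg _ _ (show (i - 1 - (ab:ℤ) - ac - 1) < 0 by omega)]
        ring
    rw [h1, h2, h3]
    exact core _ _ _ _ _ _ _ _ _ _ _ _ (by ring) (by ring)
  · have hC2 : ¬((ab : ℤ) + ac ≤ i - 1 ∧ (ab : ℤ) + bc ≤ j ∧ (ac : ℤ) + bc ≤ k) :=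
      fun h => hC ⟨by omega, h.2.1, h.2.2⟩
    rw [gterm_zero _ _ _ _ _ _ _ _ _ hC, gterm_zero _ _ _ _ _ _ _ _ _ hC,
        gterm_zero _ _ _ _ _ _ _ _ _ hC2]
    ring

/-- Simple recurrence in `L1`. -/
theorem g_simple_recurrence (i j k L1 L2 M : ℤ) :
    g i j k L1 L2 M =
      g i j k (L1 - 1) L2 M + q ^ L1 * g (i - 1) j k (L1 - 1) (L2 - 1) (M - 1) := by
  rw [g_eq_sum i j k L1 L2 M (i.toNat + 1) (j.toNat + 1) le_rfl le_rfl,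
      g_eq_sum i j k (L1 - 1) L2 M (i.toNat + 1) (j.toNat + 1) le_rfl le_rfl,
      g_eq_sum (i - 1) j k (L1 - 1) (L2 - 1) (M - 1) (i.toNat + 1) (j.toNat + 1)
        (by omega) le_rfl]
  rw [Finset.mul_sum, ← Finset.sum_add_distrib]
  refine Finset.sum_congr rfl fun ab _ => ?_
  rw [Finset.mul_sum, ← Finset.sum_add_distrib]
  refine Finset.sum_congr rfl fun ac _ => ?_
  rw [Finset.mul_sum, ← Finset.sum_add_distrib]
  refine Finset.sum_congr rfl fun bc _ => ?_
  exact key i j k L1 L2 M ab ac bc
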